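/- Let A, A' be unital C*-algebras, f : A' → A a unital *-homomorphism, and ω a state on A. There exists a unique bounded linear map L_f : H_{ω∘f} → H_ω satisfying L_f([a']) = [f(a')] for all a' ∈ A'. Moreover L_f is a linear isometry (⟨L_f ψ, L_f φ⟩_ω = ⟨ψ, φ⟩_{ω∘f} for all ψ, φ), it intertwines the GNS representations in the sense that L_f ∘ π_{ω∘f}(a') = π_ω(f(a')) ∘ L_f for all a' ∈ A', and L_f([1_{A'}]) = [1_A]. -/

import Mathlib

open scoped ComplexOrder InnerProductSpace

/-- A state on a unital C*-algebra `A`. -/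
def IsState {A : Type*} [CStarAlgebra A] (ω : A →L[ℂ] ℂ) : Prop :=
  ω 1 = 1 ∧ ∀ a : A, 0 ≤ ω (star a * a)

/-- Functoriality of the GNS construction on morphisms.  Given a unital *-homomorphism
`f : A' → A` and a state `ω` on `A`, let `(H, q, π)` be GNS data for `ω` (so `H` is the
Hilbert-space completion of `A / N_ω`, `q a = [a]` is the canonical class map with dense
range and `⟪q b, q a⟫ = ω (b⋆ * a)`, and `π` is the GNS representation with
`π a [b] = [a * b]`), and let `(H', q', π')` be GNS data for the pulled-back state `ω ∘ f`
on `A'`.  Then there is a unique bounded linear map `L_f : H' → H` with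
`L_f [a'] = [f a']`; moreover any such map is a linear isometry, intertwines the GNS
representations (`L_f ∘ π' a' = π (f a') ∘ L_f`), and sends `[1]` to `[1]`. -/
theorem gns_intertwiner_exists_unique
    {A A' : Type*} [CStarAlgebra A] [CStarAlgebra A']
    (f : A' →L[ℂ] A)
    (hfmul : ∀ x y : A', f (x * y) = f x * f y)
    (hfstar : ∀ x : A', f (star x) = star (f x))
    (hfone : f 1 = 1)
    (ω : A →L[ℂ] ℂ) (hω : IsState ω)
    -- GNS data for ω on A
    {H : Type*} [NormedAddCommGroup H] [InnerProductSpace ℂ H] [CompleteSpace H]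
    (q : A →ₗ[ℂ] H) (hq : DenseRange q)
    (hinner : ∀ a b : A, ⟪q b, q a⟫_ℂ = ω (star b * a))
    (π : A →⋆ₐ[ℂ] (H →L[ℂ] H)) (hπ : ∀ a b : A, π a (q b) = q (a * b))
    -- GNS data for ω ∘ f on A'
    {H' : Type*} [NormedAddCommGroup H'] [InnerProductSpace ℂ H'] [CompleteSpace H']
    (q' : A' →ₗ[ℂ] H') (hq' : DenseRange q')
    (hinner' : ∀ a b : A', ⟪q' b, q' a⟫_ℂ = ω (f (star b * a)))
    (π' : A' →⋆ₐ[ℂ] (H' →L[ℂ] H')) (hπ' : ∀ a b : A', π' a (q' b) = q' (a * b)) :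
    (∃! L : H' →L[ℂ] H, ∀ a' : A', L (q' a') = q (f a')) ∧
    ∀ L : H' →L[ℂ] H, (∀ a' : A', L (q' a') = q (f a')) →
      (∀ ψ φ : H', ⟪L ψ, L φ⟫_ℂ = ⟪ψ, φ⟫_ℂ) ∧
      (∀ (a' : A') (x : H'), L (π' a' x) = π (f a') (L x)) ∧
      L (q' 1) = q 1 := by
  -- the composite linear map `a' ↦ q (f a')`
  set T : A' →ₗ[ℂ] H := q ∘ₗ (f : A' →ₗ[ℂ] A) with hT
  have hTapp : ∀ a : A', T a = q (f a) := fun a => rfl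
  -- inner products are preserved on representatives
  have hinnT : ∀ a b : A', ⟪T b, T a⟫_ℂ = ⟪q' b, q' a⟫_ℂ := by
    intro a b
    rw [hTapp, hTapp, hinner, hinner', ← hfstar, ← hfmul]
  -- hence norms are preserved
  have hnormT : ∀ a : A', ‖T a‖ = ‖q' a‖ := by
    intro a
    have h1 := hinnT a a
    rw [inner_self_eq_norm_sq_to_K, inner_self_eq_norm_sq_to_K] at h1
    have h2 : ‖T a‖ ^ 2 = ‖q' a‖ ^ 2 := by exact_mod_cast h1
    nlinarith [norm_nonneg (T a), norm_nonneg (q' a), sq_nonneg (‖T a‖ - ‖q' a‖)]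
  -- `T` vanishes on the kernel of `q'`
  have hker : LinearMap.ker q' ≤ LinearMap.ker T := by
    intro x hx
    rw [LinearMap.mem_ker] at hx ⊢
    have := hnormT x
    rw [hx, norm_zero, norm_eq_zero] at this
    exact this
  -- lift `T` through the quotient and transport along `quotKerEquivRange`
  set S : (A' ⧸ LinearMap.ker q') →ₗ[ℂ] H := (LinearMap.ker q').liftQ T hker with hS
  set p : Submodule ℂ H' := LinearMap.range q' with hp
  set elin : p →ₗ[ℂ] H := S ∘ₗ (q'.quotKerEquivRange.symm : p →ₗ[ℂ] (A' ⧸ LinearMap.ker q'))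
    with helin
  have helin_app : ∀ a : A', elin ⟨q' a, ⟨a, rfl⟩⟩ = T a := by
    intro a
    have h1 : q'.quotKerEquivRange.symm ⟨q' a, ⟨a, rfl⟩⟩ = Submodule.Quotient.mk a :=
      q'.quotKerEquivRange_symm_apply_image a ⟨a, rfl⟩
    simp only [helin, LinearMap.comp_apply, LinearEquiv.coe_coe, h1]
    rfl
  have hnorm_elin : ∀ v : p, ‖elin v‖ = ‖v‖ := by
    rintro ⟨v, a, rfl⟩
    rw [helin_app a, hnormT a]
    rfl
  -- hence `elin` is an isometry on the dense subspace `p`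
  set eiso : p →ₗᵢ[ℂ] H := ⟨elin, hnorm_elin⟩ with heiso
  have hincl_ui : IsUniformInducing (p.subtypeL : p →L[ℂ] H') :=
    isometry_subtype_coe.isUniformInducing
  have hincl_dense : DenseRange (p.subtypeL : p →L[ℂ] H') := by
    have : Set.range (p.subtypeL : p →L[ℂ] H') = (p : Set H') := Subtype.range_coe
    rw [DenseRange, this]
    have : (p : Set H') = Set.range q' := by
      ext x; simp [hp, LinearMap.mem_range]
    rw [this]
    exact hq'
  -- the extension
  set L₀ : H' →L[ℂ] H :=
    ContinuousLinearMap.extend eiso.toContinuousLinearMap p.subtypeL with hL₀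
  have hL₀spec : ∀ a : A', L₀ (q' a) = q (f a) := by
    intro a
    have : L₀ (p.subtypeL ⟨q' a, ⟨a, rfl⟩⟩) = eiso.toContinuousLinearMap ⟨q' a, ⟨a, rfl⟩⟩ :=
      ContinuousLinearMap.extend_eq (h_dense := hincl_dense) (h_e := hincl_ui) ..
    exact this.trans (helin_app a)
  -- uniqueness of any map with the defining property
  have huniq : ∀ L₁ L₂ : H' →L[ℂ] H, (∀ a : A', L₁ (q' a) = q (f a)) →
      (∀ a : A', L₂ (q' a) = q (f a)) → L₁ = L₂ := by
    intro L₁ L₂ h₁ h₂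
    apply ContinuousLinearMap.coeFn_injective
    refine hq'.equalizer L₁.continuous L₂.continuous ?_
    funext a
    simp [Function.comp, h₁ a, h₂ a]
  constructor
  · exact ⟨L₀, hL₀spec, fun L hL => huniq L L₀ hL hL₀spec⟩
  · intro L hL
    refine ⟨?_, ?_, ?_⟩
    · -- isometry of inner products
      have step1 : ∀ (b : A') (φ : H'), ⟪L (q' b), L φ⟫_ℂ = ⟪q' b, φ⟫_ℂ := by
        intro b
        have hc1 : Continuous fun φ : H' => ⟪L (q' b), L φ⟫_ℂ :=
          (continuous_const.inner L.continuous)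
        have hc2 : Continuous fun φ : H' => ⟪q' b, φ⟫_ℂ :=
          continuous_const.inner continuous_id
        have := hq'.equalizer hc1 hc2 (by
          funext a
          simp only [Function.comp]
          rw [hL a, hL b, hinner, ← hfstar, ← hfmul, hinner'])
        exact fun φ => congrFun this φ
      intro ψ φ
      have hc1 : Continuous fun ψ : H' => ⟪L ψ, L φ⟫_ℂ :=
        (L.continuous.inner continuous_const)
      have hc2 : Continuous fun ψ : H' => ⟪ψ, φ⟫_ℂ :=
        continuous_id.inner continuous_const
      have := hq'.equalizer hc1 hc2 (by
        funext b
        simpa using step1 b φ)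
      exact congrFun this ψ
    · -- intertwining
      intro a' x
      have hc1 : Continuous fun x : H' => L (π' a' x) :=
        L.continuous.comp (π' a').continuous
      have hc2 : Continuous fun x : H' => π (f a') (L x) :=
        (π (f a')).continuous.comp L.continuous
      have := hq'.equalizer hc1 hc2 (by
        funext b
        simp only [Function.comp]
        rw [hπ' a' b, hL (a' * b), hL b, hπ (f a') (f b), hfmul])
      exact congrFun this x
    · rw [hL 1, hfone]
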